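/- The fundamental group of F_{n−2}(ℂ∖{0,1}) is isomorphic to the kernel of ψ_{12} : P_n → ℤ, and its commutator subgroup is isomorphic to the commutator subgroup [P_n, P_n] of the pure braid group. -/

import Mathlib

noncomputable section

abbrev ConfigSpace (n : ℕ) : Type := { z : Fin n → ℂ // Function.Injective z }

def basePt (n : ℕ) : ConfigSpace n :=
  ⟨fun i => ((i : ℕ) : ℂ), fun _ _ h => Fin.val_injective (Nat.cast_injective h)⟩

abbrev PureBraidGroup (n : ℕ) : Type := FundamentalGroup (ConfigSpace n) (basePt n)

open CategoryTheory FundamentalGroupoid in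
noncomputable def inducedHom {X Y : Type} [TopologicalSpace X] [TopologicalSpace Y]
    (f : C(X, Y)) {x : X} {y : Y} (h : f x = y) :
    FundamentalGroup X x →* FundamentalGroup Y y := by
  subst h
  exact CategoryTheory.Functor.mapEnd
    (X := (⟨x⟩ : FundamentalGroupoid (TopCat.of X)))
    (FundamentalGroupoid.fundamentalGroupoidFunctor.map
      (show TopCat.of X ⟶ TopCat.of Y from TopCat.ofHom f))

abbrev Pairs (n : ℕ) : Type := { p : Fin n × Fin n // p.1 < p.2 }

def pair12 (n : ℕ) (hn : 2 ≤ n) : Pairs n :=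
  ⟨(⟨0, by omega⟩, ⟨1, by omega⟩), by simp [Fin.mk_lt_mk]⟩

/-- `F_{n-2}(ℂ∖{0,1})`, realized as the fiber over `(0,1)` of the fibration
`ψ_12 : F_n → F_2`: configurations of `n` ordered points with `z_1 = 0` and `z_2 = 1`. -/
abbrev FiberConfig (n : ℕ) (hn : 2 ≤ n) : Type :=
  { z : Fin n → ℂ // Function.Injective z ∧ z ⟨0, by omega⟩ = 0 ∧ z ⟨1, by omega⟩ = 1 }

def fiberBasePt (n : ℕ) (hn : 2 ≤ n) : FiberConfig n hn :=
  ⟨fun i => ((i : ℕ) : ℂ), ⟨fun _ _ h => Fin.val_injective (Nat.cast_injective h), by simp, by simp⟩⟩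

/-- The restriction of `ψ_{ij} : F_n → F_2` to the fiber `F_{n-2}(ℂ∖{0,1})`. -/
def psiMapFiber (n : ℕ) (hn : 2 ≤ n) (p : Pairs n) : C(FiberConfig n hn, ConfigSpace 2) where
  toFun z := ⟨fun j => z.1 (if j = 0 then p.1.1 else p.1.2), by
    intro a b h
    fin_cases a <;> fin_cases b <;> simp only [] at h ⊢ <;>
      first
        | rfl
        | (exact absurd (z.2.1 (by simpa using h)) (ne_of_lt p.2))
        | (exact absurd (z.2.1 (by simpa using h)) (ne_of_gt p.2))⟩
  continuous_toFun := by
    apply Continuous.subtype_mk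
    exact continuous_pi fun j =>
      (continuous_apply (if j = 0 then p.1.1 else p.1.2)).comp continuous_subtype_val

/-- The forgetful map `ψ_{12} : F_n → F_2`. -/
def psiMap12 (n : ℕ) (hn : 2 ≤ n) : C(ConfigSpace n, ConfigSpace 2) where
  toFun z := ⟨fun j => z.1 (if j = 0 then (pair12 n hn).1.1 else (pair12 n hn).1.2), by
    intro a b h
    fin_cases a <;> fin_cases b <;> simp only [] at h ⊢ <;>
      first
        | rfl
        | (exact absurd (z.2 (by simpa using h)) (ne_of_lt (pair12 n hn).2))
        | (exact absurd (z.2 (by simpa using h)) (ne_of_gt (pair12 n hn).2))⟩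
  continuous_toFun := by
    apply Continuous.subtype_mk
    exact continuous_pi fun j =>
      (continuous_apply (if j = 0 then (pair12 n hn).1.1 else (pair12 n hn).1.2)).comp
        continuous_subtype_val

/-- The inclusion of the fiber `F_{n-2}(ℂ∖{0,1})` into `F_n`. -/
def fiberIncl (n : ℕ) (hn : 2 ≤ n) : C(FiberConfig n hn, ConfigSpace n) where
  toFun z := ⟨z.1, z.2.1⟩
  continuous_toFun := Continuous.subtype_mk continuous_subtype_val _

attribute [local instance] Path.Homotopic.setoid

open scoped commutatorElement

variable {X Y Z : Type} [TopologicalSpace X] [TopologicalSpace Y] [TopologicalSpace Z]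

-- F0 : toPath of inducedHom (rfl-ish case)
lemma toPath_inducedHom (f : C(X, Y)) {x : X} (h : f x = f x)
    (γ : FundamentalGroup X x) :
    FundamentalGroup.toPath (X := TopCat.of Y) (inducedHom f h γ) =
      Path.Homotopic.Quotient.map (FundamentalGroup.toPath (X := TopCat.of X) γ) f := rfl

lemma FG.ext {x : X} {γ δ : FundamentalGroup X x}
    (h : FundamentalGroup.toPath (X := TopCat.of X) γ =
      FundamentalGroup.toPath (X := TopCat.of X) δ) : γ = δ :=
  h


lemma toPath_one {y : Y} : FundamentalGroup.toPath (X := TopCat.of Y)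
    (1 : FundamentalGroup Y y) = ⟦Path.refl y⟧ :=
  FundamentalGroupoid.id_eq_path_refl _

lemma inducedHom_comp (f : C(X, Y)) (g : C(Y, Z)) {x : X} {y : Y} {z : Z}
    (hf : f x = y) (hg : g y = z) (h : g.comp f x = z) (γ : FundamentalGroup X x) :
    inducedHom g hg (inducedHom f hf γ) = inducedHom (g.comp f) h γ := by
  subst hf; subst hg
  apply FG.ext
  rw [toPath_inducedHom, toPath_inducedHom]
  show _ = Path.Homotopic.Quotient.map (FundamentalGroup.toPath (X := TopCat.of X) γ) (g.comp f)
  induction (FundamentalGroup.toPath (X := TopCat.of X) γ) using Quotient.inductionOn with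
  | h p =>
    rfl

lemma inducedHom_id {x : X} (h : ContinuousMap.id X x = x) (γ : FundamentalGroup X x) :
    inducedHom (ContinuousMap.id X) h γ = γ := by
  apply FG.ext
  show Path.Homotopic.Quotient.map (FundamentalGroup.toPath (X := TopCat.of X) γ)
    (ContinuousMap.id X) = _
  induction (FundamentalGroup.toPath (X := TopCat.of X) γ) using Quotient.inductionOn with
  | h p =>
    rfl

lemma inducedHom_congr {f g : C(X, Y)} {x : X} {y : Y} (hfg : f = g)
    (hf : f x = y) (hg : g x = y) (γ : FundamentalGroup X x) :
    inducedHom f hf γ = inducedHom g hg γ := by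
  subst hfg; rfl

lemma inducedHom_const {x : X} {y : Y} (h : ContinuousMap.const X y x = y)
    (γ : FundamentalGroup X x) :
    inducedHom (ContinuousMap.const X y) h γ = 1 := by
  apply FG.ext
  rw [toPath_one]
  show Path.Homotopic.Quotient.map (FundamentalGroup.toPath (X := TopCat.of X) γ)
    (ContinuousMap.const X y) = _
  induction (FundamentalGroup.toPath (X := TopCat.of X) γ) using Quotient.inductionOn with
  | h p =>
    rfl

lemma inducedHom_prod_inj {A B : Type} [TopologicalSpace A] [TopologicalSpace B] {pb : A × B}
    {γ δ : FundamentalGroup (A × B) pb}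
    (h1 : inducedHom (⟨Prod.fst, continuous_fst⟩ : C(A × B, A)) (rfl : _ = pb.1) γ =
          inducedHom (⟨Prod.fst, continuous_fst⟩ : C(A × B, A)) (rfl : _ = pb.1) δ)
    (h2 : inducedHom (⟨Prod.snd, continuous_snd⟩ : C(A × B, B)) (rfl : _ = pb.2) γ =
          inducedHom (⟨Prod.snd, continuous_snd⟩ : C(A × B, B)) (rfl : _ = pb.2) δ) :
    γ = δ := by
  apply FG.ext
  have t1 := congrArg (FundamentalGroup.toPath (X := TopCat.of A)) h1
  have t2 := congrArg (FundamentalGroup.toPath (X := TopCat.of B)) h2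
  have e1 := Path.Homotopic.prod_projLeft_projRight
    (FundamentalGroup.toPath (X := TopCat.of (A × B)) γ)
  have e2 := Path.Homotopic.prod_projLeft_projRight
    (FundamentalGroup.toPath (X := TopCat.of (A × B)) δ)
  rw [← e1, ← e2]
  exact congr (congrArg Path.Homotopic.prod (by exact t1)) (by exact t2)

lemma inducedHom_prod_inj' {A B : Type} [TopologicalSpace A] [TopologicalSpace B] {pb : A × B}
    {a : A} {b : B}
    (ha : (⟨Prod.fst, continuous_fst⟩ : C(A × B, A)) pb = a)
    (hb : (⟨Prod.snd, continuous_snd⟩ : C(A × B, B)) pb = b)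
    {γ δ : FundamentalGroup (A × B) pb}
    (h1 : inducedHom (⟨Prod.fst, continuous_fst⟩ : C(A × B, A)) ha γ =
          inducedHom (⟨Prod.fst, continuous_fst⟩ : C(A × B, A)) ha δ)
    (h2 : inducedHom (⟨Prod.snd, continuous_snd⟩ : C(A × B, B)) hb γ =
          inducedHom (⟨Prod.snd, continuous_snd⟩ : C(A × B, B)) hb δ) :
    γ = δ := by
  subst ha; subst hb
  exact inducedHom_prod_inj h1 h2

section EH
variable {M : Type} [TopologicalSpace M] [Group M] [IsTopologicalGroup M]

lemma pi1_topgroup_comm (m₀ : M) (a b : FundamentalGroup M m₀) : a * b = b * a := by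
  have cmu : Continuous (fun p : M × M => p.1 * m₀⁻¹ * p.2) := by continuity
  let μ : C(M × M, M) := ⟨fun p => p.1 * m₀⁻¹ * p.2, cmu⟩
  let ι₁ : C(M, M × M) := ⟨fun z => (z, m₀), by continuity⟩
  let ι₂ : C(M, M × M) := ⟨fun z => (m₀, z), by continuity⟩
  let fstC : C(M × M, M) := ⟨Prod.fst, continuous_fst⟩
  let sndC : C(M × M, M) := ⟨Prod.snd, continuous_snd⟩
  have hμ : μ (m₀, m₀) = m₀ := by simp [μ]
  let Mu : FundamentalGroup (M × M) (m₀, m₀) →* FundamentalGroup M m₀ := inducedHom μ hμ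
  let I1 : FundamentalGroup M m₀ →* FundamentalGroup (M × M) (m₀, m₀) := inducedHom ι₁ rfl
  let I2 : FundamentalGroup M m₀ →* FundamentalGroup (M × M) (m₀, m₀) := inducedHom ι₂ rfl
  have hfst1 : ∀ γ, inducedHom fstC rfl (I1 γ) = γ := fun γ =>
    (inducedHom_comp ι₁ fstC rfl rfl rfl γ).trans
      ((inducedHom_congr (show fstC.comp ι₁ = ContinuousMap.id M by ext z; rfl) rfl rfl γ).trans
        (inducedHom_id rfl γ))
  have hsnd2 : ∀ γ, inducedHom sndC rfl (I2 γ) = γ := fun γ =>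
    (inducedHom_comp ι₂ sndC rfl rfl rfl γ).trans
      ((inducedHom_congr (show sndC.comp ι₂ = ContinuousMap.id M by ext z; rfl) rfl rfl γ).trans
        (inducedHom_id rfl γ))
  have hfst2 : ∀ γ, inducedHom fstC rfl (I2 γ) = 1 := fun γ =>
    (inducedHom_comp ι₂ fstC rfl rfl rfl γ).trans
      ((inducedHom_congr (show fstC.comp ι₂ = ContinuousMap.const M m₀ by ext z; rfl)
          rfl rfl γ).trans (inducedHom_const rfl γ))
  have hsnd1 : ∀ γ, inducedHom sndC rfl (I1 γ) = 1 := fun γ =>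
    (inducedHom_comp ι₁ sndC rfl rfl rfl γ).trans
      ((inducedHom_congr (show sndC.comp ι₁ = ContinuousMap.const M m₀ by ext z; rfl)
          rfl rfl γ).trans (inducedHom_const rfl γ))
  have hMu1 : ∀ γ, Mu (I1 γ) = γ := fun γ =>
    (inducedHom_comp ι₁ μ rfl hμ hμ γ).trans
      ((inducedHom_congr (show μ.comp ι₁ = ContinuousMap.id M by ext z; simp [μ, ι₁])
          hμ rfl γ).trans (inducedHom_id rfl γ))
  have hMu2 : ∀ γ, Mu (I2 γ) = γ := fun γ =>
    (inducedHom_comp ι₂ μ rfl hμ hμ γ).trans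
      ((inducedHom_congr (show μ.comp ι₂ = ContinuousMap.id M by ext z; simp [μ, ι₂])
          hμ rfl γ).trans (inducedHom_id rfl γ))
  have key : I1 a * I2 b = I2 b * I1 a := by
    apply inducedHom_prod_inj
    · rw [map_mul, map_mul]
      show inducedHom fstC rfl (I1 a) * inducedHom fstC rfl (I2 b)
        = inducedHom fstC rfl (I2 b) * inducedHom fstC rfl (I1 a)
      rw [hfst1 a, hfst2 b, one_mul, mul_one]
    · rw [map_mul, map_mul]
      show inducedHom sndC rfl (I1 a) * inducedHom sndC rfl (I2 b)
        = inducedHom sndC rfl (I2 b) * inducedHom sndC rfl (I1 a)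
      rw [hsnd1 a, hsnd2 b, one_mul, mul_one]
  calc a * b = Mu (I1 a) * Mu (I2 b) := by rw [hMu1 a, hMu2 b]
    _ = Mu (I1 a * I2 b) := (map_mul Mu _ _).symm
    _ = Mu (I2 b * I1 a) := by rw [key]
    _ = Mu (I2 b) * Mu (I1 a) := map_mul Mu _ _
    _ = b * a := by rw [hMu1 a, hMu2 b]

end EH

lemma inducedHom_leftInv {X Y : Type} [TopologicalSpace X] [TopologicalSpace Y]
    (f : C(X, Y)) (g : C(Y, X)) {x : X} {y : Y} (hgf : g.comp f = ContinuousMap.id X)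
    (hf : f x = y) (hg : g y = x) (γ : FundamentalGroup X x) :
    inducedHom g hg (inducedHom f hf γ) = γ :=
  (inducedHom_comp f g hf hg (by rw [hgf]; try rfl) γ).trans
    ((inducedHom_congr hgf (by rw [hgf]; try rfl) rfl γ).trans (inducedHom_id rfl γ))

lemma inducedHom_inj_of_leftInv {X Y : Type} [TopologicalSpace X] [TopologicalSpace Y]
    (f : C(X, Y)) (g : C(Y, X)) {x : X} {y : Y} (hgf : g.comp f = ContinuousMap.id X)
    (hf : f x = y) (hg : g y = x) :
    Function.Injective (inducedHom f hf) := fun γ δ hh => by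
  have h2 := congrArg (inducedHom g hg) hh
  rwa [inducedHom_leftInv f g hgf hf hg, inducedHom_leftInv f g hgf hf hg] at h2

lemma pi1_C_comm (c : ℂ) (x y : FundamentalGroup ℂ c) : x * y = y * x :=
  pi1_topgroup_comm (M := Multiplicative ℂ) c x y

abbrev NZ : Type := { w : ℂ // w ≠ 0 }

instance : Group NZ where
  mul a b := ⟨a.1 * b.1, mul_ne_zero a.2 b.2⟩
  one := ⟨1, one_ne_zero⟩
  inv a := ⟨a.1⁻¹, inv_ne_zero a.2⟩
  mul_assoc a b c := Subtype.ext (mul_assoc _ _ _)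
  one_mul a := Subtype.ext (one_mul _)
  mul_one a := Subtype.ext (mul_one _)
  inv_mul_cancel a := Subtype.ext (inv_mul_cancel₀ a.2)

instance : IsTopologicalGroup NZ where
  continuous_mul := by
    apply Continuous.subtype_mk
    exact (continuous_subtype_val.fst').mul (continuous_subtype_val.snd')
  continuous_inv := by
    apply Continuous.subtype_mk
    rw [continuous_iff_continuousAt]
    intro a
    exact (continuousAt_inv₀ a.2).comp continuousAt_subtype_val


def kMap : C(ConfigSpace 2, ℂ × NZ) where
  toFun z := (z.1 0, ⟨z.1 1 - z.1 0, sub_ne_zero.2 fun h => by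
    have := z.2 h; exact absurd this (by decide)⟩)
  continuous_toFun := by
    apply Continuous.prodMk
    · exact (continuous_apply (0 : Fin 2)).comp continuous_subtype_val
    · apply Continuous.subtype_mk
      exact ((continuous_apply (1 : Fin 2)).comp continuous_subtype_val).sub
        ((continuous_apply (0 : Fin 2)).comp continuous_subtype_val)

def kMap' : C(ℂ × NZ, ConfigSpace 2) where
  toFun p := ⟨fun j => if j = 0 then p.1 else p.1 + p.2.1, by
    intro a b h
    fin_cases a <;> fin_cases b <;> simp only [] at h ⊢ <;>
      first
      | rfl
      | (exfalso; revert h; simp; exact fun h => absurd (by linear_combination h : p.2.1 = 0) p.2.2)⟩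
  continuous_toFun := by
    apply Continuous.subtype_mk
    apply continuous_pi
    intro j
    by_cases hj : j = 0 <;> simp only [hj, if_pos, if_neg, reduceIte]
    · exact continuous_fst
    · exact continuous_fst.add (continuous_subtype_val.comp continuous_snd)

lemma kMap'_kMap : kMap'.comp kMap = ContinuousMap.id _ := by
  ext z j
  show (if j = 0 then z.1 0 else z.1 0 + (z.1 1 - z.1 0)) = z.1 j
  fin_cases j <;> simp

lemma pi1_config2_comm (a : ConfigSpace 2) (γ δ : FundamentalGroup (ConfigSpace 2) a) :
    γ * δ = δ * γ := by
  have hinj := inducedHom_inj_of_leftInv kMap kMap' kMap'_kMap rfl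
    (by have := congrArg (fun F : C(ConfigSpace 2, ConfigSpace 2) => F a) kMap'_kMap
        simpa using this)
  apply hinj
  rw [map_mul, map_mul]
  apply inducedHom_prod_inj
  · rw [map_mul, map_mul]
    exact pi1_C_comm _ _ _
  · rw [map_mul, map_mul]
    exact pi1_topgroup_comm _ _ _


section FiberStuff

variable (n : ℕ) (hn : 2 ≤ n)

lemma zne (z : ConfigSpace n) : z.1 ⟨1, by omega⟩ - z.1 ⟨0, by omega⟩ ≠ 0 :=
  sub_ne_zero.2 fun h => by simpa using z.2 h

def nuMap : C(ConfigSpace n, FiberConfig n hn) where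
  toFun z := ⟨fun i => (z.1 i - z.1 ⟨0, by omega⟩) / (z.1 ⟨1, by omega⟩ - z.1 ⟨0, by omega⟩), by
    refine ⟨?_, by simp, div_self (zne n hn z)⟩
    intro a b h
    dsimp only at h
    rw [div_eq_div_iff (zne n hn z) (zne n hn z)] at h
    have h2 := mul_right_cancel₀ (zne n hn z) h
    exact z.2 (by linear_combination h2)⟩
  continuous_toFun := by
    apply Continuous.subtype_mk
    apply continuous_pi
    intro i
    exact Continuous.div
      (((continuous_apply i).comp continuous_subtype_val).sub
        ((continuous_apply _).comp continuous_subtype_val))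
      (((continuous_apply _).comp continuous_subtype_val).sub
        ((continuous_apply _).comp continuous_subtype_val))
      (fun z => zne n hn z)

def phiMap : C(ConfigSpace n, ConfigSpace 2 × FiberConfig n hn) :=
  (psiMap12 n hn).prodMk (nuMap n hn)

def phiMap' : C(ConfigSpace 2 × FiberConfig n hn, ConfigSpace n) where
  toFun p := ⟨fun i => p.1.1 0 + (p.1.1 1 - p.1.1 0) * p.2.1 i, by
    have hd : p.1.1 1 - p.1.1 0 ≠ 0 := sub_ne_zero.2 fun h' => by simpa using p.1.2 h'
    intro a b h
    dsimp only at h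
    have h2 := add_left_cancel h
    exact p.2.2.1 (mul_left_cancel₀ hd h2)⟩
  continuous_toFun := by
    apply Continuous.subtype_mk
    apply continuous_pi
    intro i
    apply Continuous.add
    · exact (continuous_apply _).comp (continuous_subtype_val.comp continuous_fst)
    · exact Continuous.mul
        (((continuous_apply _).comp (continuous_subtype_val.comp continuous_fst)).sub
          ((continuous_apply _).comp (continuous_subtype_val.comp continuous_fst)))
        ((continuous_apply i).comp (continuous_subtype_val.comp continuous_snd))

def iotaMap : C(FiberConfig n hn, ConfigSpace 2 × FiberConfig n hn) where
  toFun w := (psiMap12 n hn (basePt n), w)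
  continuous_toFun := continuous_const.prodMk continuous_id

lemma psiMap12_apply (z : ConfigSpace n) (j : Fin 2) :
    (psiMap12 n hn z).1 j = z.1 (if j = 0 then ⟨0, by omega⟩ else ⟨1, by omega⟩) := rfl

lemma phi'_phi : (phiMap' n hn).comp (phiMap n hn) = ContinuousMap.id _ := by
  ext z i
  show (psiMap12 n hn z).1 0 + ((psiMap12 n hn z).1 1 - (psiMap12 n hn z).1 0) *
    ((nuMap n hn z).1 i) = z.1 i
  rw [psiMap12_apply, psiMap12_apply]
  simp only [if_pos rfl, reduceIte, show ((1 : Fin 2) = 0) ↔ False from by decide, if_false]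
  show z.1 _ + (z.1 _ - z.1 _) * ((z.1 i - z.1 _) / (z.1 _ - z.1 _)) = z.1 i
  have hd := zne n hn z
  field_simp
  ring

lemma phi_phi' : (phiMap n hn).comp (phiMap' n hn) = ContinuousMap.id _ := by
  have key : ∀ p : ConfigSpace 2 × FiberConfig n hn,
      (phiMap n hn) ((phiMap' n hn) p) = p := by
    rintro ⟨a, w⟩
    have hw0 : w.1 ⟨0, by omega⟩ = 0 := w.2.2.1
    have hw1 : w.1 ⟨1, by omega⟩ = 1 := w.2.2.2
    have happ : ∀ i : Fin n, ((phiMap' n hn) (a, w)).1 i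
        = a.1 0 + (a.1 1 - a.1 0) * w.1 i := fun i => rfl
    have hd : a.1 1 - a.1 0 ≠ 0 := sub_ne_zero.2 fun h' => by simpa using a.2 h'
    refine Prod.ext ?_ ?_
    · apply Subtype.ext
      funext j
      show ((phiMap' n hn) (a, w)).1 (if j = 0 then ⟨0, by omega⟩ else ⟨1, by omega⟩) = a.1 j
      by_cases hj : j = 0
      · subst hj
        rw [if_pos rfl, happ, hw0]
        ring
      · have hj1 : j = 1 := by
          have h2 := j.2
          have h0 : j.1 ≠ 0 := fun hh => hj (Fin.ext hh)
          exact Fin.ext (by omega)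
        subst hj1
        rw [if_neg (by decide), happ, hw1]
        ring
    · apply Subtype.ext
      funext i
      show (((phiMap' n hn) (a, w)).1 i - ((phiMap' n hn) (a, w)).1 ⟨0, by omega⟩) /
        (((phiMap' n hn) (a, w)).1 ⟨1, by omega⟩ - ((phiMap' n hn) (a, w)).1 ⟨0, by omega⟩)
          = w.1 i
      rw [happ, happ, happ, hw0, hw1]
      simp only [mul_zero, add_zero, add_sub_cancel_left, mul_one]
      field_simp
  apply ContinuousMap.ext
  intro p
  exact key p

end FiberStuff

section Assemble

variable (n : ℕ) (hn : 2 ≤ n)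

lemma phi_incl : (phiMap n hn).comp (fiberIncl n hn) = iotaMap n hn := by
  apply ContinuousMap.ext
  intro w
  have hw0 : w.1 ⟨0, by omega⟩ = 0 := w.2.2.1
  have hw1 : w.1 ⟨1, by omega⟩ = 1 := w.2.2.2
  refine Prod.ext ?_ ?_
  · apply Subtype.ext
    funext j
    show (fiberIncl n hn w).1 (if j = 0 then ⟨0, by omega⟩ else ⟨1, by omega⟩)
      = (basePt n).1 (if j = 0 then ⟨0, by omega⟩ else ⟨1, by omega⟩)
    by_cases hj : j = 0
    · rw [if_pos hj]
      show w.1 _ = (((⟨0, by omega⟩ : Fin n) : ℕ) : ℂ)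
      rw [hw0]
      simp
    · rw [if_neg hj]
      show w.1 _ = (((⟨1, by omega⟩ : Fin n) : ℕ) : ℂ)
      rw [hw1]
      simp
  · apply Subtype.ext
    funext i
    show (w.1 i - w.1 ⟨0, by omega⟩) / (w.1 ⟨1, by omega⟩ - w.1 ⟨0, by omega⟩) = w.1 i
    rw [hw0, hw1]
    simp

lemma iota_base : iotaMap n hn (fiberBasePt n hn) = phiMap n hn (basePt n) := by
  refine Prod.ext rfl ?_
  apply Subtype.ext
  funext i
  show ((i : ℕ) : ℂ) = ((basePt n).1 i - (basePt n).1 ⟨0, by omega⟩) /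
    ((basePt n).1 ⟨1, by omega⟩ - (basePt n).1 ⟨0, by omega⟩)
  show ((i : ℕ) : ℂ) = (((i : ℕ) : ℂ) - (((0:ℕ) : ℕ) : ℂ)) / ((((1:ℕ)) : ℂ) - (((0:ℕ)) : ℂ))
  norm_num

lemma fst_phi : (⟨Prod.fst, continuous_fst⟩ :
    C(ConfigSpace 2 × FiberConfig n hn, ConfigSpace 2)).comp (phiMap n hn) = psiMap12 n hn :=
  rfl

lemma fst_iota : (⟨Prod.fst, continuous_fst⟩ :
    C(ConfigSpace 2 × FiberConfig n hn, ConfigSpace 2)).comp (iotaMap n hn)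
    = ContinuousMap.const _ (psiMap12 n hn (basePt n)) := rfl

lemma snd_iota : (⟨Prod.snd, continuous_snd⟩ :
    C(ConfigSpace 2 × FiberConfig n hn, FiberConfig n hn)).comp (iotaMap n hn)
    = ContinuousMap.id _ := rfl

lemma hF'base : phiMap' n hn (phiMap n hn (basePt n)) = basePt n := by
  have h := congrArg (fun F : C(ConfigSpace n, ConfigSpace n) => F (basePt n)) (phi'_phi n hn)
  simpa using h

end Assemble

section Homs

variable (n : ℕ) (hn : 2 ≤ n)

def Fh : PureBraidGroup n →*
    FundamentalGroup (ConfigSpace 2 × FiberConfig n hn) (phiMap n hn (basePt n)) :=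
  inducedHom (phiMap n hn) rfl

def F'h : FundamentalGroup (ConfigSpace 2 × FiberConfig n hn) (phiMap n hn (basePt n)) →*
    PureBraidGroup n :=
  inducedHom (phiMap' n hn) (hF'base n hn)

def Ph : FundamentalGroup (ConfigSpace 2 × FiberConfig n hn) (phiMap n hn (basePt n)) →*
    FundamentalGroup (ConfigSpace 2) (psiMap12 n hn (basePt n)) :=
  inducedHom (⟨Prod.fst, continuous_fst⟩ :
    C(ConfigSpace 2 × FiberConfig n hn, ConfigSpace 2)) rfl

lemma hsnd_base : (⟨Prod.snd, continuous_snd⟩ :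
    C(ConfigSpace 2 × FiberConfig n hn, FiberConfig n hn)) (phiMap n hn (basePt n))
    = fiberBasePt n hn :=
  (congrArg Prod.snd (iota_base n hn)).symm

def Qh : FundamentalGroup (ConfigSpace 2 × FiberConfig n hn) (phiMap n hn (basePt n)) →*
    FundamentalGroup (FiberConfig n hn) (fiberBasePt n hn) :=
  inducedHom (⟨Prod.snd, continuous_snd⟩ :
    C(ConfigSpace 2 × FiberConfig n hn, FiberConfig n hn)) (hsnd_base n hn)

def Jh : FundamentalGroup (FiberConfig n hn) (fiberBasePt n hn) →*
    FundamentalGroup (ConfigSpace 2 × FiberConfig n hn) (phiMap n hn (basePt n)) :=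
  inducedHom (iotaMap n hn) (iota_base n hn)

def Ih : FundamentalGroup (FiberConfig n hn) (fiberBasePt n hn) →* PureBraidGroup n :=
  inducedHom (fiberIncl n hn) (x := fiberBasePt n hn) (y := basePt n) rfl

def Psih : PureBraidGroup n →*
    FundamentalGroup (ConfigSpace 2) (psiMap12 n hn (basePt n)) :=
  inducedHom (psiMap12 n hn) (x := basePt n) rfl

lemma hF'F : ∀ γ, F'h n hn (Fh n hn γ) = γ := fun γ =>
  inducedHom_leftInv (phiMap n hn) (phiMap' n hn) (phi'_phi n hn) rfl (hF'base n hn) γ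

lemma hFF' : ∀ γ, Fh n hn (F'h n hn γ) = γ := fun γ =>
  inducedHom_leftInv (phiMap' n hn) (phiMap n hn) (phi_phi' n hn) (hF'base n hn) rfl γ

lemma hFI : ∀ β, Fh n hn (Ih n hn β) = Jh n hn β := fun β =>
  (inducedHom_comp (fiberIncl n hn) (phiMap n hn) rfl rfl
      (by rw [phi_incl n hn]; exact iota_base n hn) β).trans
    (inducedHom_congr (phi_incl n hn) (by rw [phi_incl n hn]; exact iota_base n hn)
      (iota_base n hn) β)

lemma hPF : ∀ g, Psih n hn g = Ph n hn (Fh n hn g) := fun g =>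
  ((inducedHom_comp (phiMap n hn) (⟨Prod.fst, continuous_fst⟩ :
        C(ConfigSpace 2 × FiberConfig n hn, ConfigSpace 2)) rfl rfl rfl g).trans
    (inducedHom_congr (fst_phi n hn) rfl rfl g)).symm

lemma hPJ : ∀ β, Ph n hn (Jh n hn β) = 1 := fun β =>
  (inducedHom_comp (iotaMap n hn) (⟨Prod.fst, continuous_fst⟩ :
        C(ConfigSpace 2 × FiberConfig n hn, ConfigSpace 2)) (iota_base n hn) rfl
      (by rw [fst_iota n hn]; try rfl) β).trans
    ((inducedHom_congr (fst_iota n hn) (by rw [fst_iota n hn]; try rfl) rfl β).trans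
      (inducedHom_const rfl β))

lemma hQJ : ∀ β, Qh n hn (Jh n hn β) = β := fun β =>
  (inducedHom_comp (iotaMap n hn) (⟨Prod.snd, continuous_snd⟩ :
        C(ConfigSpace 2 × FiberConfig n hn, FiberConfig n hn)) (iota_base n hn)
      (hsnd_base n hn) rfl β).trans
    ((inducedHom_congr (snd_iota n hn) rfl rfl β).trans (inducedHom_id rfl β))

lemma hIF'J : ∀ β, Ih n hn β = F'h n hn (Jh n hn β) := fun β =>
  (hF'F n hn (Ih n hn β)).symm.trans (congrArg (F'h n hn) (hFI n hn β))

end Homs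

theorem fiberConfig_pi1_eq_ker_psi12 (n : ℕ) (hn : 2 ≤ n) :
    Function.Injective (inducedHom (fiberIncl n hn) (x := fiberBasePt n hn) rfl) ∧
    MonoidHom.range (inducedHom (fiberIncl n hn) (x := fiberBasePt n hn) rfl)
      = MonoidHom.ker (inducedHom (psiMap12 n hn) (x := basePt n) rfl) ∧
    Subgroup.map (inducedHom (fiberIncl n hn) (x := fiberBasePt n hn) rfl)
        (commutator (FundamentalGroup (FiberConfig n hn) (fiberBasePt n hn)))
      = commutator (PureBraidGroup n) := by
  have hleft : ((⟨Prod.snd, continuous_snd⟩ :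
      C(ConfigSpace 2 × FiberConfig n hn, FiberConfig n hn)).comp (phiMap n hn)).comp
      (fiberIncl n hn) = ContinuousMap.id _ := by
    apply ContinuousMap.ext
    intro w
    have h := ContinuousMap.congr_fun (phi_incl n hn) w
    exact congrArg Prod.snd h
  refine ⟨?_, ?_, ?_⟩
  · exact inducedHom_inj_of_leftInv (fiberIncl n hn)
      ((⟨Prod.snd, continuous_snd⟩ :
        C(ConfigSpace 2 × FiberConfig n hn, FiberConfig n hn)).comp (phiMap n hn))
      hleft rfl (ContinuousMap.congr_fun hleft _)
  · ext g
    simp only [MonoidHom.mem_range, MonoidHom.mem_ker]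
    constructor
    · rintro ⟨β, rfl⟩
      show Psih n hn (Ih n hn β) = 1
      rw [hPF n hn, hFI n hn, hPJ n hn]
    · intro hg
      refine ⟨Qh n hn (Fh n hn g), ?_⟩
      show Ih n hn (Qh n hn (Fh n hn g)) = g
      apply inducedHom_inj_of_leftInv (phiMap n hn) (phiMap' n hn) (phi'_phi n hn) rfl
        (hF'base n hn)
      show Fh n hn (Ih n hn (Qh n hn (Fh n hn g))) = Fh n hn g
      rw [hFI n hn]
      apply inducedHom_prod_inj' rfl (hsnd_base n hn)
      · show Ph n hn (Jh n hn (Qh n hn (Fh n hn g))) = Ph n hn (Fh n hn g)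
        rw [hPJ n hn, ← hPF n hn g]
        exact (show Psih n hn g = 1 from hg).symm
      · show Qh n hn (Jh n hn (Qh n hn (Fh n hn g))) = Qh n hn (Fh n hn g)
        rw [hQJ n hn]
  · have hJcomm : Subgroup.map (Jh n hn)
        (commutator (FundamentalGroup (FiberConfig n hn) (fiberBasePt n hn)))
        = commutator (FundamentalGroup (ConfigSpace 2 × FiberConfig n hn)
            (phiMap n hn (basePt n))) := by
      apply le_antisymm
      · rw [commutator_def, commutator_def, Subgroup.map_commutator]
        exact Subgroup.commutator_mono le_top le_top
      · rw [commutator_def]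
        refine Subgroup.commutator_le.mpr fun g _ h _ => ?_
        have key : ⁅g, h⁆ = Jh n hn ⁅Qh n hn g, Qh n hn h⁆ := by
          apply inducedHom_prod_inj' rfl (hsnd_base n hn)
          · show Ph n hn ⁅g, h⁆ = Ph n hn (Jh n hn ⁅Qh n hn g, Qh n hn h⁆)
            rw [map_commutatorElement, hPJ n hn]
            exact commutatorElement_eq_one_iff_mul_comm.mpr (pi1_config2_comm _ _ _)
          · show Qh n hn ⁅g, h⁆ = Qh n hn (Jh n hn ⁅Qh n hn g, Qh n hn h⁆)
            rw [map_commutatorElement, hQJ n hn]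
        rw [key]
        exact Subgroup.mem_map_of_mem _
          (Subgroup.commutator_mem_commutator (Subgroup.mem_top _) (Subgroup.mem_top _))
    have hIJ : Ih n hn = (F'h n hn).comp (Jh n hn) := MonoidHom.ext (hIF'J n hn)
    show Subgroup.map (Ih n hn) (commutator _) = commutator (PureBraidGroup n)
    rw [hIJ, ← Subgroup.map_map, hJcomm, commutator_def, commutator_def,
      Subgroup.map_commutator,
      Subgroup.map_top_of_surjective _ (fun γ => ⟨Fh n hn γ, hF'F n hn γ⟩)]

end
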